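/- If Φ : ℂ^k → ℂ^k is a holomorphic solution of the system (@), then s ↦ A(s)Φ(s) is also a solution of (@). -/

import Mathlib

open Matrix Complex

noncomputable section

/-- The companion matrix `A(s)` of `P_s(z) = Σ_{h=0}^{k} (−1)^h s_h z^{k−h}` (with `s_0 = 1`):
`A(s)_{i,i+1} = 1` for `1 ≤ i ≤ k−1`, the last row is `((−1)^{k−1} s_k, …, s_1)`
(here `0`-indexed: `s i` is `s_{i+1}`). -/
def LcompA (k : ℕ) (s : Fin k → ℂ) : Matrix (Fin k) (Fin k) ℂ := fun i j =>
  if (i : ℕ) = k - 1 then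
    (-1 : ℂ) ^ (k - 1 - (j : ℕ)) * s ⟨k - 1 - (j : ℕ), by have := j.isLt; omega⟩
  else if (j : ℕ) = (i : ℕ) + 1 then 1 else 0

/-- The system (@) at a point `s`: `(−1)^{k+h} ∂Φ/∂s_h = ∂(A(s)^{k−h} Φ)/∂s_k`
for every `h ∈ {1, …, k−1}` (partial derivatives as directional derivatives along
the coordinate directions). -/
def SatA (k : ℕ) (Φ : (Fin k → ℂ) → Fin k → ℂ) (s : Fin k → ℂ) : Prop :=
  ∀ h : ℕ, ∀ _h1 : 1 ≤ h, ∀ _h2 : h ≤ k - 1,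
    ((-1 : ℂ) ^ (k + h)) •
        fderiv ℂ Φ s (Pi.single (⟨h - 1, by omega⟩ : Fin k) (1 : ℂ))
      = fderiv ℂ (fun t => (LcompA k t ^ (k - h)) *ᵥ Φ t) s
          (Pi.single (⟨k - 1, by omega⟩ : Fin k) (1 : ℂ))

namespace CompanionAux

variable {k : ℕ}

lemma apply_fderiv {F : (Fin k → ℂ) → Fin k → ℂ} {s : Fin k → ℂ}
    (hF : ∀ i, DifferentiableAt ℂ (fun t => F t i) s) (d : Fin k → ℂ) (i : Fin k) :
    fderiv ℂ F s d i = fderiv ℂ (fun t => F t i) s d := by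
  have h := fderiv_pi (𝕜 := ℂ) (φ := fun i t => F t i) (x := s) hF
  rw [show F = (fun x i => F x i) from rfl, h]
  rfl

lemma diff_entryA (i j : Fin k) : Differentiable ℂ (fun t : Fin k → ℂ => LcompA k t i j) := by
  unfold LcompA
  by_cases hi : (i : ℕ) = k - 1
  · simp only [hi, if_true, eq_self_iff_true]
    exact (differentiable_const _).mul (differentiable_apply _)
  · simp only [hi, if_false]
    exact differentiable_const _

lemma diff_powA (m : ℕ) : ∀ i j : Fin k, Differentiable ℂ (fun t : Fin k → ℂ => (LcompA k t ^ m) i j) := by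
  induction m with
  | zero =>
      intro i j
      simp only [pow_zero, Matrix.one_apply]
      exact differentiable_const _
  | succ m ih =>
      intro i j
      have : (fun t : Fin k → ℂ => (LcompA k t ^ (m + 1)) i j)
          = fun t => ∑ l, (LcompA k t ^ m) i l * LcompA k t l j := by
        funext t; rw [pow_succ, Matrix.mul_apply]
      rw [this]
      exact Differentiable.fun_sum fun l _ => (ih i l).mul (diff_entryA l j)

lemma fderiv_entryA (s : Fin k → ℂ) (i j : Fin k) (p : Fin k) :
    fderiv ℂ (fun t => LcompA k t i j) s (Pi.single p (1 : ℂ))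
      = if (i : ℕ) = k - 1 ∧ (p : ℕ) = k - 1 - (j : ℕ) then (-1 : ℂ) ^ (k - 1 - (j : ℕ)) else 0 := by
  unfold LcompA
  by_cases hi : (i : ℕ) = k - 1
  · simp only [hi, if_true, eq_self_iff_true, true_and]
    set idx : Fin k := ⟨k - 1 - (j : ℕ), by have := j.isLt; omega⟩ with hidx
    have hdiff : DifferentiableAt ℂ (fun t : Fin k → ℂ => t idx) s :=
      differentiableAt_pi.mp differentiableAt_fun_id idx
    have hproj : fderiv ℂ (fun t : Fin k → ℂ => t idx) s (Pi.single p (1 : ℂ))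
        = (Pi.single p (1 : ℂ) : Fin k → ℂ) idx := by
      have h1 := apply_fderiv (F := fun t : Fin k → ℂ => t) (s := s)
        (fun i => differentiableAt_pi.mp differentiableAt_fun_id i) (Pi.single p (1 : ℂ)) idx
      rw [fderiv_id'] at h1
      exact h1.symm
    rw [fderiv_const_mul hdiff ((-1 : ℂ) ^ (k - 1 - (j : ℕ)))]
    simp only [ContinuousLinearMap.smul_apply, smul_eq_mul]
    rw [hproj, Pi.single_apply]
    by_cases hp : (p : ℕ) = k - 1 - (j : ℕ)
    · rw [if_pos (Fin.ext hp.symm : idx = p), if_pos hp, mul_one]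
    · rw [if_neg (fun hcon => hp ((congrArg Fin.val hcon).symm)), if_neg hp, mul_zero]
  · simp only [hi, if_false, false_and]
    rw [fderiv_const_apply]
    rfl

lemma fderiv_mulVecA (M : (Fin k → ℂ) → Matrix (Fin k) (Fin k) ℂ)
    (v : (Fin k → ℂ) → Fin k → ℂ)
    (hM : ∀ i j, Differentiable ℂ fun t => M t i j)
    (hv : ∀ j, Differentiable ℂ fun t => v t j) (s d : Fin k → ℂ) :
    fderiv ℂ (fun t => M t *ᵥ v t) s d
      = (Matrix.of fun i j => fderiv ℂ (fun t => M t i j) s d) *ᵥ v s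
        + M s *ᵥ (fun j => fderiv ℂ (fun t => v t j) s d) := by
  have hdiff : ∀ i, DifferentiableAt ℂ (fun t => (M t *ᵥ v t) i) s := by
    intro i
    have : (fun t => (M t *ᵥ v t) i) = fun t => ∑ j, M t i j * v t j := by
      funext t; simp [Matrix.mulVec, dotProduct]
    rw [this]
    exact (Differentiable.fun_sum fun j _ => ((hM i j).mul (hv j))) s
  funext i
  rw [apply_fderiv hdiff d i]
  have h1 : (fun t => (M t *ᵥ v t) i) = fun t => ∑ j, M t i j * v t j := by
    funext t; simp [Matrix.mulVec, dotProduct]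
  rw [h1, fderiv_fun_sum (A := fun j t => M t i j * v t j) (fun j _ => (((hM i j).mul (hv j)) s))]
  simp only [ContinuousLinearMap.sum_apply, Pi.add_apply, Matrix.mulVec, dotProduct,
    Matrix.of_apply]
  rw [← Finset.sum_add_distrib]
  refine Finset.sum_congr rfl fun j _ => ?_
  rw [fderiv_fun_mul ((hM i j) s) ((hv j) s)]
  simp only [ContinuousLinearMap.add_apply, ContinuousLinearMap.smul_apply, smul_eq_mul]
  ring

lemma dA_mulVec (s : Fin k → ℂ) (p : ℕ) (hp : p ≤ k - 1) (hk : 1 ≤ k) (w : Fin k → ℂ) :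
    (Matrix.of fun i j => fderiv ℂ (fun t => LcompA k t i j) s
        (Pi.single (⟨p, by omega⟩ : Fin k) (1 : ℂ))) *ᵥ w
      = Pi.single (⟨k - 1, by omega⟩ : Fin k) ((-1 : ℂ) ^ p * w ⟨k - 1 - p, by omega⟩) := by
  funext i
  simp only [Matrix.mulVec, dotProduct, Matrix.of_apply, fderiv_entryA]
  by_cases hi : (i : ℕ) = k - 1
  · rw [Finset.sum_eq_single (⟨k - 1 - p, by omega⟩ : Fin k)]
    · have hc : (((⟨p, by omega⟩ : Fin k) : ℕ)) = k - 1 - (((⟨k - 1 - p, by omega⟩ : Fin k) : ℕ)) := by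
        simp only [Fin.val_mk]; omega
      rw [if_pos ⟨hi, hc⟩]
      rw [Pi.single_apply, if_pos (Fin.ext (by simpa using hi))]
      have he : k - 1 - (((⟨k - 1 - p, by omega⟩ : Fin k) : ℕ)) = p := by
        simp only [Fin.val_mk]; omega
      rw [he]
    · intro b _ hb
      rw [if_neg, zero_mul]
      rintro ⟨-, hcond⟩
      apply hb
      apply Fin.ext
      have hbl := b.isLt
      simp only [Fin.val_mk] at hcond ⊢
      omega
    · intro habs; exact absurd (Finset.mem_univ _) habs
  · rw [Pi.single_apply, if_neg (fun hcon => hi (by rw [hcon]))]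
    apply Finset.sum_eq_zero
    intro j _
    rw [if_neg (fun hcon => hi hcon.1), zero_mul]

lemma powA_row_zero (hk : 2 ≤ k) (s : Fin k → ℂ) (m : ℕ) :
    m ≤ k - 1 → ∀ j : Fin k, (LcompA k s ^ m) ⟨0, by omega⟩ j = if (j : ℕ) = m then 1 else 0 := by
  induction m with
  | zero =>
      intro _ j
      rw [pow_zero, Matrix.one_apply]
      by_cases hj : (j : ℕ) = 0
      · rw [if_pos (Fin.ext (by simpa using hj.symm)), if_pos hj]
      · rw [if_neg (fun hcon => hj (by rw [← hcon])), if_neg hj]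
  | succ m ih =>
      intro hm j
      rw [pow_succ, Matrix.mul_apply]
      rw [Finset.sum_eq_single (⟨m, by omega⟩ : Fin k)]
      · rw [ih (by omega), if_pos (by simp), one_mul]
        unfold LcompA
        rw [if_neg (by simp only [Fin.val_mk]; omega)]
      · intro b _ hb
        rw [ih (by omega), if_neg, zero_mul]
        intro hcon; exact hb (Fin.ext (by simpa using hcon))
      · intro habs; exact absurd (Finset.mem_univ _) habs

end CompanionAux

open CompanionAux in
theorem companion_preserves_solutions
    (k : ℕ) (hk : 2 ≤ k) (Φ : (Fin k → ℂ) → Fin k → ℂ)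
    (hΦdiff : Differentiable ℂ Φ) (hΦsol : ∀ s : Fin k → ℂ, SatA k Φ s) :
    ∀ s : Fin k → ℂ, SatA k (fun t => LcompA k t *ᵥ Φ t) s := by
  intro s
  unfold SatA
  intro h h1 h2
  set m := k - h with hmdef
  have hm1 : 1 ≤ m := by omega
  have hm2 : m ≤ k - 1 := by omega
  have hΦj : ∀ j, Differentiable ℂ fun t => Φ t j := fun j t =>
    differentiableAt_pi.mp (hΦdiff t) j
  set g : (Fin k → ℂ) → Fin k → ℂ := fun t => (LcompA k t ^ m) *ᵥ Φ t with hgdef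
  have hgj : ∀ j, Differentiable ℂ fun t => g t j := by
    intro j
    have : (fun t => g t j) = fun t => ∑ l, (LcompA k t ^ m) j l * Φ t l := by
      funext t; simp [hgdef, Matrix.mulVec, dotProduct]
    rw [this]
    exact Differentiable.fun_sum fun l _ => (diff_powA m j l).mul (hΦj l)
  have hfun : (fun t => (LcompA k t ^ (k - h)) *ᵥ ((fun t => LcompA k t *ᵥ Φ t) t))
      = fun t => LcompA k t *ᵥ g t := by
    funext t
    simp only [hgdef]
    rw [Matrix.mulVec_mulVec, Matrix.mulVec_mulVec, ← hmdef, ← pow_succ, ← pow_succ']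
  rw [hfun]
  rw [fderiv_mulVecA (LcompA k) Φ diff_entryA hΦj,
      fderiv_mulVecA (LcompA k) g diff_entryA hgj]
  rw [dA_mulVec s (h - 1) (by omega) (by omega) (Φ s),
      dA_mulVec s (k - 1) (by omega) (by omega) (g s)]
  have hsol := hΦsol s h h1 h2
  have hDφ : (fun j => fderiv ℂ (fun t => Φ t j) s
        (Pi.single (⟨h - 1, by omega⟩ : Fin k) (1 : ℂ)))
      = fderiv ℂ Φ s (Pi.single (⟨h - 1, by omega⟩ : Fin k) (1 : ℂ)) := by
    funext i; exact (apply_fderiv (fun i => (hΦj i) s) _ i).symm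
  have hDg : (fun j => fderiv ℂ (fun t => g t j) s
        (Pi.single (⟨k - 1, by omega⟩ : Fin k) (1 : ℂ)))
      = fderiv ℂ g s (Pi.single (⟨k - 1, by omega⟩ : Fin k) (1 : ℂ)) := by
    funext i; exact (apply_fderiv (fun i => (hgj i) s) _ i).symm
  rw [hDφ, hDg]
  have hsol2 : ((-1 : ℂ) ^ (k + h)) •
      fderiv ℂ Φ s (Pi.single (⟨h - 1, by omega⟩ : Fin k) (1 : ℂ))
      = fderiv ℂ g s (Pi.single (⟨k - 1, by omega⟩ : Fin k) (1 : ℂ)) := hsol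
  rw [smul_add, ← Matrix.mulVec_smul, hsol2]
  congr 1
  -- single term identity
  have hg0 : g s ⟨k - 1 - (k - 1), by omega⟩ = Φ s ⟨k - 1 - (h - 1), by omega⟩ := by
    have h0 : (⟨k - 1 - (k - 1), by omega⟩ : Fin k) = ⟨0, by omega⟩ := by
      apply Fin.ext; simp
    rw [h0]
    have : g s ⟨0, by omega⟩ = ∑ j, (LcompA k s ^ m) ⟨0, by omega⟩ j * Φ s j := by
      simp [hgdef, Matrix.mulVec, dotProduct]
    rw [this]
    rw [Finset.sum_eq_single (⟨m, by omega⟩ : Fin k)]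
    · rw [powA_row_zero hk s m hm2, if_pos (by simp), one_mul]
      congr 1
      apply Fin.ext
      simp
      omega
    · intro b _ hb
      rw [powA_row_zero hk s m hm2, if_neg, zero_mul]
      intro hcon; exact hb (Fin.ext (by simpa using hcon))
    · intro habs; exact absurd (Finset.mem_univ _) habs
  rw [hg0]
  rw [← Pi.single_smul]
  rw [smul_eq_mul, ← mul_assoc]
  rw [← pow_add]
  have hexp : k + h + (h - 1) = (k - 1) + 2 * h := by omega
  rw [hexp, pow_add, pow_mul]
  norm_num
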